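/- arXiv:2401.04802 — 2 statements merged into one kernel-verified Lean document; each statement's English description precedes it below -/
import Mathlib

section
/- Fix Δ, λ ∈ ℕ, a finite relational language L, and a sequence (B_n)_{n≥1} of finite L-structures each of degree at most Δ. Then there is m ∈ ℕ such that for every n ≥ 1, the structure B_n has at most m λ-rare elements. (Lemma 4.12(ii) of the paper, stated semantically.) -/
open FirstOrder Language

namespace PaperDefs

/-- The Gaifman graph of an `L`-structure `M`: two distinct elements are adjacent iff they
occur together in some tuple satisfying some relation of `L`. -/
def gaifman (L : FirstOrder.Language) (M : Type*) [L.Structure M] : SimpleGraph M where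
  Adj a b := a ≠ b ∧ ∃ (n : ℕ) (R : L.Relations n) (c : Fin n → M),
      Structure.RelMap R c ∧ (∃ i, c i = a) ∧ (∃ j, c j = b)
  symm := by
    constructor
    rintro a b ⟨hab, n, R, c, hR, h1, h2⟩
    exact ⟨hab.symm, n, R, c, hR, h2, h1⟩
  loopless := by
    constructor
    rintro a ⟨hab, -⟩
    exact hab rfl

/-- `dist_M(a, b) ≤ d` in the Gaifman graph: there is a walk of length at most `d`. -/
def DistLE (L : FirstOrder.Language) (M : Type*) [L.Structure M] (a b : M) (d : ℕ) : Prop :=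
  ∃ w : (gaifman L M).Walk a b, w.length ≤ d

/-- The `λ`-neighbourhood of a set `s`: all elements within Gaifman distance `λ`
of some member of `s`. -/
def nbhd (L : FirstOrder.Language) (M : Type*) [L.Structure M] (lam : ℕ) (s : Set M) :
    Set M :=
  {c | ∃ a ∈ s, DistLE L M c a lam}

/-- `f` is an isomorphism between the substructures induced on `S` and on `T`
(for a relational language). -/
def IsInducedIso (L : FirstOrder.Language) {M N : Type*} [L.Structure M] [L.Structure N]
    (S : Set M) (T : Set N) (f : ↥S ≃ ↥T) : Prop :=
  ∀ (n : ℕ) (R : L.Relations n) (x : Fin n → ↥S),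
    Structure.RelMap R (fun i => ((x i : M))) ↔ Structure.RelMap R (fun i => ((f (x i) : N)))

/-- `a ∈ B n` is `λ`-rare (with respect to the family `B`): for some `m`, every `B n'`
contains at most `m` elements `b` whose pointed `λ`-neighbourhood is isomorphic to that
of `a`. -/
def Rare (L : FirstOrder.Language) (B : ℕ → Type*) [∀ n, L.Structure (B n)]
    (lam : ℕ) (n : ℕ) (a : B n) : Prop :=
  ∃ m : ℕ, ∀ n' : ℕ,
    ({b : B n' |
        ∃ f : ↥(nbhd L (B n') lam {b}) ≃ ↥(nbhd L (B n) lam {a}),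
          IsInducedIso L (nbhd L (B n') lam {b}) (nbhd L (B n) lam {a}) f ∧
          ∀ hb : b ∈ nbhd L (B n') lam {b}, (↑(f ⟨b, hb⟩) : B n) = a}).ncard ≤ m

/-- The `λ`-closure of a set `s ⊆ B n`: the `λ`-neighbourhood of `s` together with all
`λ`-rare elements of `B n`. -/
def closureSet (L : FirstOrder.Language) (B : ℕ → Type*) [∀ n, L.Structure (B n)]
    (lam : ℕ) (n : ℕ) (s : Set (B n)) : Set (B n) :=
  nbhd L (B n) lam (s ∪ {a | Rare L B lam n a})

-- auxiliary graph lemmas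
private def evalW {V : Type*} {Δ : ℕ} (σ : V → Fin Δ → V) : V → List (Fin Δ) → V
  | v, [] => v
  | v, i :: l => evalW σ (σ v i) l

private lemma exists_list_of_walk {V : Type*} {Δ : ℕ} {G : SimpleGraph V}
    (σ : V → Fin Δ → V) (hσ : ∀ v, G.neighborSet v ⊆ Set.range (σ v)) :
    ∀ {v w : V} (p : G.Walk v w), ∃ l : List (Fin Δ), l.length ≤ p.length ∧ evalW σ v l = w := by
  intro v w p
  induction p with
  | nil => exact ⟨[], by simp, rfl⟩
  | @cons u x w h p ih =>
    obtain ⟨l, hl, he⟩ := ih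
    obtain ⟨i, hi⟩ := hσ u h
    exact ⟨i :: l, by simpa using Nat.succ_le_succ hl, by simp [evalW, hi, he]⟩

private lemma exists_sigma {V : Type*} {Δ : ℕ} (G : SimpleGraph V)
    (hdeg : ∀ v, (G.neighborSet v).encard ≤ (Δ : ℕ∞)) :
    ∃ σ : V → Fin Δ → V, ∀ v, G.neighborSet v ⊆ Set.range (σ v) := by
  have key : ∀ v : V, ∃ f : Fin Δ → V, G.neighborSet v ⊆ Set.range f := by
    intro v
    obtain ⟨hfin, n₀, hn₀, hle⟩ := Set.encard_le_coe_iff.mp (hdeg v)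
    haveI : Finite (G.neighborSet v) := hfin
    have hcard : Nat.card (G.neighborSet v) ≤ Δ := by
      rw [Nat.card_coe_set_eq, Set.ncard_def, hn₀]
      simpa using hle
    let e := Finite.equivFin (G.neighborSet v)
    refine ⟨fun i => if h : (i : ℕ) < Nat.card (G.neighborSet v) then (e.symm ⟨(i : ℕ), h⟩ : V) else v, ?_⟩
    intro x hx
    refine ⟨⟨((e ⟨x, hx⟩ : Fin _) : ℕ), lt_of_lt_of_le (e ⟨x, hx⟩).isLt hcard⟩, ?_⟩
    simp
    exact congrArg Subtype.val (e.symm_apply_apply ⟨x, hx⟩)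
  exact ⟨fun v => Classical.choose (key v), fun v => Classical.choose_spec (key v)⟩

private lemma ball_embedding {V : Type*} (G : SimpleGraph V) (Δ lam : ℕ)
    (hdeg : ∀ v, (G.neighborSet v).encard ≤ (Δ : ℕ∞)) (b : V) :
    Nonempty ({c : V | ∃ w : G.Walk c b, w.length ≤ lam} ↪ (Fin lam → Option (Fin Δ))) := by
  obtain ⟨σ, hσ⟩ := exists_sigma G hdeg
  have key : ∀ c : {c : V | ∃ w : G.Walk c b, w.length ≤ lam},
      ∃ l : List (Fin Δ), l.length ≤ lam ∧ evalW σ b l = (c : V) := by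
    rintro ⟨c, w, hw⟩
    obtain ⟨l, hl, he⟩ := exists_list_of_walk σ hσ w.reverse
    exact ⟨l, le_trans (by simpa using hl) hw, he⟩
  choose l hl he using key
  refine ⟨⟨fun c => fun i => (l c)[(i : ℕ)]?, ?_⟩⟩
  intro c d h
  have hld : l c = l d := by
    apply List.ext_getElem?
    intro k
    by_cases hk : k < lam
    · exact congrFun h ⟨k, hk⟩
    · rw [List.getElem?_eq_none_iff.mpr (le_trans (hl c) (by omega)),
        List.getElem?_eq_none_iff.mpr (le_trans (hl d) (by omega))]
  exact Subtype.ext ((he c).symm.trans (by rw [hld]; exact he d))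


private def codeOf (L : FirstOrder.Language) {M : Type*} [L.Structure M] {T : Type*}
    (lam : ℕ) (a : M) (ha : a ∈ nbhd L M lam {a}) (e : ↥(nbhd L M lam {a}) ↪ T) :
    Set T × (∀ p : (Σ k, L.Relations k), Set (Fin p.1 → T)) × T :=
  (Set.range e,
   fun p => {x | ∃ y : Fin p.1 → ↥(nbhd L M lam {a}),
      (∀ i, e (y i) = x i) ∧ Structure.RelMap p.2 (fun i => ((y i : M)))},
   e ⟨a, ha⟩)

private lemma code_iso (L : FirstOrder.Language) {M N : Type*} [L.Structure M] [L.Structure N]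
    {T : Type*} (lam : ℕ) (b : M) (a : N)
    (hb : b ∈ nbhd L M lam {b}) (ha : a ∈ nbhd L N lam {a})
    (eb : ↥(nbhd L M lam {b}) ↪ T) (ea : ↥(nbhd L N lam {a}) ↪ T)
    (h : codeOf L lam b hb eb = codeOf L lam a ha ea) :
    ∃ f : ↥(nbhd L M lam {b}) ≃ ↥(nbhd L N lam {a}),
      IsInducedIso L (nbhd L M lam {b}) (nbhd L N lam {a}) f ∧
      ∀ hb' : b ∈ nbhd L M lam {b}, (↑(f ⟨b, hb'⟩) : N) = a := by
  have h1 : Set.range eb = Set.range ea := congrArg Prod.fst h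
  have h2 : (codeOf L lam b hb eb).2.1 = (codeOf L lam a ha ea).2.1 := congrArg (fun z => z.2.1) h
  have h3 : eb ⟨b, hb⟩ = ea ⟨a, ha⟩ := congrArg (fun z => z.2.2) h
  let f : ↥(nbhd L M lam {b}) ≃ ↥(nbhd L N lam {a}) :=
    (Equiv.ofInjective eb eb.injective).trans
      ((Equiv.setCongr h1).trans (Equiv.ofInjective ea ea.injective).symm)
  have hf : ∀ y, ea (f y) = eb y := by
    intro y
    have h4 : (Equiv.ofInjective ea ea.injective) (f y)
        = (Equiv.setCongr h1) ((Equiv.ofInjective eb eb.injective) y) := by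
      simp [f]
    have h5 : (ea (f y) : T) = (((Equiv.ofInjective ea ea.injective) (f y) : Set.range ea) : T) := by
      rw [Equiv.ofInjective_apply]
    rw [h5, h4]
    rfl
  have memb : ∀ (k : ℕ) (R : L.Relations k) (x : Fin k → ↥(nbhd L M lam {b})),
      Structure.RelMap R (fun i => ((x i : M)))
        ↔ (fun i => eb (x i)) ∈ (codeOf L lam b hb eb).2.1 ⟨k, R⟩ := by
    intro k R x
    constructor
    · intro hR; exact ⟨x, fun i => rfl, hR⟩
    · rintro ⟨y, hy, hR⟩
      have : y = x := funext fun i => eb.injective (hy i)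
      rwa [this] at hR
  have mema : ∀ (k : ℕ) (R : L.Relations k) (x : Fin k → ↥(nbhd L N lam {a})),
      Structure.RelMap R (fun i => ((x i : N)))
        ↔ (fun i => ea (x i)) ∈ (codeOf L lam a ha ea).2.1 ⟨k, R⟩ := by
    intro k R x
    constructor
    · intro hR; exact ⟨x, fun i => rfl, hR⟩
    · rintro ⟨y, hy, hR⟩
      have : y = x := funext fun i => ea.injective (hy i)
      rwa [this] at hR
  refine ⟨f, ?_, ?_⟩
  · intro k R x
    rw [memb k R x, mema k R (fun i => f (x i))]
    have hx : (fun i => ea (f (x i))) = (fun i => eb (x i)) := funext fun i => hf (x i)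
    rw [hx, h2]
  · intro hb'
    have hbb : (⟨b, hb'⟩ : ↥(nbhd L M lam {b})) = ⟨b, hb⟩ := rfl
    have : ea (f ⟨b, hb'⟩) = ea ⟨a, ha⟩ := by rw [hf, hbb, h3]
    exact congrArg Subtype.val (ea.injective this)

/-- Lemma 4.12(ii) of the paper, stated semantically.
Fix `Δ, λ ∈ ℕ`, a finite relational language `L`, and a sequence of finite
`L`-structures `B n`, each of degree at most `Δ`.  Then there is `m` such that every
`B n` has at most `m` `λ`-rare elements. -/
theorem stmt11 (L : FirstOrder.Language) [L.IsRelational] [Finite L.Symbols]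
    (Δ lam : ℕ) (B : ℕ → Type*) [∀ n, L.Structure (B n)] [∀ n, Fintype (B n)]
    (hdeg : ∀ (n : ℕ) (v : B n), ((gaifman L (B n)).neighborSet v).encard ≤ (Δ : ℕ∞)) :
    ∃ m : ℕ, ∀ n : ℕ, ({a : B n | Rare L B lam n a}).ncard ≤ m := by
  classical
  have hself : ∀ (n : ℕ) (b : B n), b ∈ nbhd L (B n) lam {b} :=
    fun n b => ⟨b, rfl, SimpleGraph.Walk.nil, Nat.zero_le _⟩
  -- embeddings of neighbourhoods into a fixed finite type
  have hemb : ∀ (n : ℕ) (b : B n),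
      Nonempty (↥(nbhd L (B n) lam {b}) ↪ (Fin lam → Option (Fin Δ))) := by
    intro n b
    obtain ⟨g⟩ := ball_embedding (gaifman L (B n)) Δ lam (hdeg n) b
    have hsub : nbhd L (B n) lam {b}
        ⊆ {c : B n | ∃ w : (gaifman L (B n)).Walk c b, w.length ≤ lam} := by
      rintro c ⟨a, rfl, w, hw⟩
      exact ⟨w, hw⟩
    exact ⟨(Set.embeddingOfSubset _ _ hsub).trans g⟩
  let e : ∀ (n : ℕ) (b : B n), ↥(nbhd L (B n) lam {b}) ↪ (Fin lam → Option (Fin Δ)) :=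
    fun n b => (hemb n b).some
  let Code := Set (Fin lam → Option (Fin Δ))
      × (∀ p : (Σ k, L.Relations k), Set (Fin p.1 → (Fin lam → Option (Fin Δ))))
      × (Fin lam → Option (Fin Δ))
  haveI hRS : Finite (Σ k, L.Relations k) :=
    Finite.of_injective (fun p => (Sum.inr p : L.Symbols)) (fun a b h => by simpa using h)
  haveI : Finite Code := by
    unfold Code
    infer_instance
  let c0 : ∀ (n : ℕ), B n → Code := fun n b => codeOf L lam b (hself n b) (e n b)
  have key : ∀ c : Code, ∃ m : ℕ, ∀ n : ℕ,
      ({b : B n | Rare L B lam n b ∧ c0 n b = c}).ncard ≤ m := by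
    intro c
    by_cases hc : ∃ n₀, ∃ a₀ : B n₀, Rare L B lam n₀ a₀ ∧ c0 n₀ a₀ = c
    · obtain ⟨n₀, a₀, ⟨m, hm⟩, hcode⟩ := hc
      refine ⟨m, fun n => le_trans (Set.ncard_le_ncard ?_ (Set.toFinite _)) (hm n)⟩
      rintro b ⟨hrare, hb⟩
      exact code_iso L lam b a₀ (hself n b) (hself n₀ a₀) (e n b) (e n₀ a₀)
        (hb.trans hcode.symm)
    · refine ⟨0, fun n => ?_⟩
      have hempty : {b : B n | Rare L B lam n b ∧ c0 n b = c} = ∅ := by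
        ext b
        simp only [Set.mem_setOf_eq, Set.mem_empty_iff_false, iff_false, not_and]
        intro h1 h2
        exact hc ⟨n, b, h1, h2⟩
      rw [hempty, Set.ncard_empty]
  choose bound hbound using key
  haveI : Fintype Code := Fintype.ofFinite _
  refine ⟨∑ c : Code, bound c, fun n => ?_⟩
  have hfin : ({a : B n | Rare L B lam n a}).Finite := Set.toFinite _
  have h1 : ({a : B n | Rare L B lam n a}).ncard = hfin.toFinset.card := by
    rw [← Set.ncard_coe_finset hfin.toFinset, Set.Finite.coe_toFinset]
  rw [h1, Finset.card_eq_sum_card_fiberwise (f := c0 n) (t := Finset.univ)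
    (fun x _ => Finset.mem_univ _)]
  apply Finset.sum_le_sum
  intro c _
  have hcoe : (↑(hfin.toFinset.filter (fun a => c0 n a = c)) : Set (B n))
      = {b : B n | Rare L B lam n b ∧ c0 n b = c} := by
    ext b
    simp [Set.Finite.mem_toFinset]
  calc (hfin.toFinset.filter (fun a => c0 n a = c)).card
      = ({b : B n | Rare L B lam n b ∧ c0 n b = c}).ncard := by
        rw [← hcoe, Set.ncard_coe_finset]
    _ ≤ bound c := hbound c n


end PaperDefs
end

section
/- Fix Δ, λ ∈ ℕ, a finite relational language L, and a sequence (B_n)_{n≥1} of finite L-structures each of degree at most Δ. Then there is a first-order L-formula φ(x) in one free variable such that for every n ≥ 1 and every element a of B_n: B_n satisfies φ(a) if and only if a is λ-rare. (The first-order part of Lemma 4.12(i) of the paper.) -/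
open FirstOrder Language

namespace PaperDefs

section DistLemmas

variable (L : FirstOrder.Language) {M : Type*} [L.Structure M]

lemma distLE_refl (a : M) (d : ℕ) : DistLE L M a a d := ⟨.nil, by simp⟩

lemma distLE_zero {a b : M} : DistLE L M a b 0 ↔ a = b := by
  constructor
  · rintro ⟨w, hw⟩
    cases w with
    | nil => rfl
    | cons h w => simp at hw
  · rintro rfl; exact distLE_refl L a 0

lemma distLE_symm {a b : M} {d : ℕ} (h : DistLE L M a b d) : DistLE L M b a d := by
  obtain ⟨w, hw⟩ := h
  exact ⟨w.reverse, by simpa using hw⟩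

lemma distLE_mono {a b : M} {d d' : ℕ} (h : d ≤ d') (h' : DistLE L M a b d) :
    DistLE L M a b d' := by
  obtain ⟨w, hw⟩ := h'
  exact ⟨w, hw.trans h⟩

lemma distLE_succ {a b : M} {d : ℕ} :
    DistLE L M a b (d+1) ↔ DistLE L M a b d ∨
      ∃ z, (gaifman L M).Adj a z ∧ DistLE L M z b d := by
  constructor
  · rintro ⟨w, hw⟩
    cases w with
    | nil => exact Or.inl ⟨.nil, by simp⟩
    | cons h w => exact Or.inr ⟨_, h, w, by simpa using hw⟩
  · rintro (⟨w, hw⟩ | ⟨z, hz, w, hw⟩)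
    · exact ⟨w, hw.trans (Nat.le_succ d)⟩
    · exact ⟨.cons hz w, by simpa using hw⟩

end DistLemmas

section Formulas

variable (L : FirstOrder.Language) [Finite L.Symbols] {M : Type*} [L.Structure M]

noncomputable local instance relFintype : Fintype (Σ l, L.Relations l) := by
  have : Finite (Σ l, L.Relations l) :=
    Finite.of_injective (Sum.inr : _ → L.Symbols) Sum.inr_injective
  exact Fintype.ofFinite _

noncomputable def adjForm : L.Formula (Fin 2) :=
  ∼(Term.equal (.var 0) (.var 1)) ⊓
    BoundedFormula.iSup (fun s : Σ l, L.Relations l =>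
      (s.2.boundedFormula (fun i => &i) ⊓
        BoundedFormula.iSup (fun i : Fin s.1 => Term.bdEqual (&i) (.var (Sum.inl 0))) ⊓
        BoundedFormula.iSup (fun j : Fin s.1 => Term.bdEqual (&j) (.var (Sum.inl 1)))).exs)

omit [Finite L.Symbols] in
lemma realize_bf_zero {α : Type*} (φ : L.Formula α) (v : α → M) (xs : Fin 0 → M) :
    BoundedFormula.Realize φ v xs ↔ φ.Realize v := by
  rw [Formula.Realize]
  exact iff_of_eq (congrArg _ (funext fun i => i.elim0))

omit [Finite L.Symbols] in
lemma realize_exs' {α : Type*} {n : ℕ} (φ : L.BoundedFormula α n) (v : α → M) (xs : Fin 0 → M) :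
    BoundedFormula.Realize φ.exs v xs ↔ ∃ bs : Fin n → M, φ.Realize v bs := by
  rw [realize_bf_zero]
  exact BoundedFormula.realize_exs

lemma realize_adjForm (v : Fin 2 → M) :
    (adjForm L).Realize v ↔ (gaifman L M).Adj (v 0) (v 1) := by
  show BoundedFormula.Realize _ v default ↔ _
  simp only [adjForm, realize_exs', BoundedFormula.realize_inf, BoundedFormula.realize_not,
    BoundedFormula.realize_iSup, Finset.mem_univ, true_and,
    BoundedFormula.realize_rel, Term.realize_var, Term.realize_relabel,
    BoundedFormula.realize_bdEqual, Sum.elim_inl, Sum.elim_inr, Function.comp_apply,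
    Term.equal, Term.relabel]
  show _ ↔ (_ ≠ _ ∧ _)
  constructor
  · rintro ⟨hne, s, xs, ⟨hR, i, hi⟩, j, hj⟩
    exact ⟨hne, s.1, s.2, xs, hR, ⟨i, hi⟩, ⟨j, hj⟩⟩
  · rintro ⟨hne, n, R, c, hR, ⟨i, hi⟩, ⟨j, hj⟩⟩
    exact ⟨hne, ⟨n, R⟩, c, ⟨hR, i, hi⟩, j, hj⟩


noncomputable def distForm : ℕ → L.Formula (Fin 2)
  | 0 => Term.equal (.var 0) (.var 1)
  | d+1 => distForm d ⊔
      ((BoundedFormula.relabel (![Sum.inl 0, Sum.inr 0] : Fin 2 → Fin 2 ⊕ Fin 1) (adjForm L)) ⊓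
       (BoundedFormula.relabel (![Sum.inr 0, Sum.inl 1] : Fin 2 → Fin 2 ⊕ Fin 1)
          (distForm d))).exs

lemma realize_distForm : ∀ (d : ℕ) (v : Fin 2 → M),
    (distForm L d).Realize v ↔ DistLE L M (v 0) (v 1) d := by
  intro d
  induction d with
  | zero =>
    intro v
    rw [distForm, distLE_zero, Formula.realize_equal]
    simp
  | succ d ih =>
    intro v
    rw [distForm, distLE_succ]
    show BoundedFormula.Realize _ v default ↔ _
    rw [BoundedFormula.realize_sup, realize_exs']
    constructor
    · rintro (h | ⟨bs, h⟩)
      · exact Or.inl ((ih v).1 h)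
      · rw [BoundedFormula.realize_inf, BoundedFormula.realize_relabel,
          BoundedFormula.realize_relabel, realize_bf_zero, realize_bf_zero,
          realize_adjForm, ih] at h
        simp only [Function.comp_apply, Matrix.cons_val_zero, Matrix.cons_val_one,
          Matrix.head_cons, Sum.elim_inl, Sum.elim_inr] at h
        exact Or.inr ⟨_, h⟩
    · rintro (h | ⟨z, hz, hd⟩)
      · exact Or.inl ((ih v).2 h)
      · refine Or.inr ⟨fun _ => z, ?_⟩
        rw [BoundedFormula.realize_inf, BoundedFormula.realize_relabel,
          BoundedFormula.realize_relabel, realize_bf_zero, realize_bf_zero,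
          realize_adjForm, ih]
        simp only [Function.comp_apply, Matrix.cons_val_zero, Matrix.cons_val_one,
          Matrix.head_cons, Sum.elim_inl, Sum.elim_inr]
        exact ⟨hz, hd⟩

end Formulas


section Ball

variable (L : FirstOrder.Language) {M : Type*} [L.Structure M] [Fintype M]

lemma ball_ncard_le {Δ : ℕ}
    (hdeg : ∀ v : M, ((gaifman L M).neighborSet v).encard ≤ (Δ : ℕ∞)) (a : M) (d : ℕ) :
    {c : M | DistLE L M c a d}.ncard ≤ (Δ + 1) ^ d := by
  classical
  suffices h : ∃ t : Finset M, {c : M | DistLE L M c a d} ⊆ ↑t ∧ t.card ≤ (Δ + 1) ^ d by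
    obtain ⟨t, hsub, hcard⟩ := h
    calc {c : M | DistLE L M c a d}.ncard ≤ (↑t : Set M).ncard :=
          Set.ncard_le_ncard hsub t.finite_toSet
      _ = t.card := Set.ncard_coe_finset t
      _ ≤ (Δ + 1) ^ d := hcard
  induction d with
  | zero =>
    refine ⟨{a}, ?_, by simp⟩
    intro c hc
    rw [Set.mem_setOf_eq, distLE_zero] at hc
    simp [hc]
  | succ d ih =>
    obtain ⟨t, hsub, hcard⟩ := ih
    refine ⟨t.biUnion (fun z => insert z ((gaifman L M).neighborSet z).toFinset), ?_, ?_⟩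
    · intro c hc
      rw [Set.mem_setOf_eq, distLE_succ] at hc
      simp only [Finset.coe_biUnion, Set.mem_iUnion, Finset.mem_coe, Finset.mem_insert,
        Set.mem_toFinset, SimpleGraph.mem_neighborSet]
      rcases hc with hc | ⟨z, hz, hd⟩
      · exact ⟨c, hsub hc, Or.inl rfl⟩
      · exact ⟨z, hsub hd, Or.inr hz.symm⟩
    · calc (t.biUnion _).card ≤ ∑ z ∈ t, (insert z ((gaifman L M).neighborSet z).toFinset).card :=
            Finset.card_biUnion_le
        _ ≤ ∑ _z ∈ t, (Δ + 1) := by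
            refine Finset.sum_le_sum fun z _ => ?_
            refine (Finset.card_insert_le _ _).trans ?_
            have h1 := hdeg z
            rw [Set.encard_le_coe_iff_finite_ncard_le] at h1
            have h2 : ((gaifman L M).neighborSet z).toFinset.card =
                ((gaifman L M).neighborSet z).ncard := by
              rw [Set.ncard_eq_toFinset_card']
            omega
        _ = t.card * (Δ + 1) := by rw [Finset.sum_const, smul_eq_mul]
        _ ≤ (Δ + 1) ^ d * (Δ + 1) := by exact Nat.mul_le_mul_right _ hcard
        _ = (Δ + 1) ^ (d + 1) := by ring

end Ball


section PIso

variable (L : FirstOrder.Language)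

/-- Pointed isomorphism of `lam`-neighbourhoods. -/
def PIso {M N : Type*} [L.Structure M] [L.Structure N] (lam : ℕ) (b : M) (a : N) : Prop :=
  ∃ f : ↥(nbhd L M lam {b}) ≃ ↥(nbhd L N lam {a}),
    IsInducedIso L (nbhd L M lam {b}) (nbhd L N lam {a}) f ∧
    ∀ hb : b ∈ nbhd L M lam {b}, (↑(f ⟨b, hb⟩) : N) = a

variable {M N P : Type*} [L.Structure M] [L.Structure N] [L.Structure P] {lam : ℕ}

lemma mem_nbhd_self (a : M) : a ∈ nbhd L M lam {a} :=
  ⟨a, rfl, distLE_refl L a lam⟩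

lemma nbhd_singleton (a : M) : nbhd L M lam {a} = {c | DistLE L M c a lam} := by
  ext c
  simp [nbhd]

lemma PIso.symm {b : M} {a : N} (h : PIso L lam b a) : PIso L lam a b := by
  obtain ⟨f, hiso, hpt⟩ := h
  refine ⟨f.symm, ?_, ?_⟩
  · intro n R x
    have := hiso n R (fun i => f.symm (x i))
    simp only [Equiv.apply_symm_apply] at this
    exact this.symm
  · intro ha
    have h1 : f ⟨b, mem_nbhd_self L b⟩ = ⟨a, ha⟩ := Subtype.ext (hpt _)
    rw [← h1, Equiv.symm_apply_apply]

lemma PIso.trans {c : M} {b : N} {a : P} (h1 : PIso L lam c b) (h2 : PIso L lam b a) :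
    PIso L lam c a := by
  obtain ⟨f, hf, hfp⟩ := h1
  obtain ⟨g, hg, hgp⟩ := h2
  refine ⟨f.trans g, ?_, ?_⟩
  · intro n R x
    exact (hf n R x).trans (hg n R (fun i => f (x i)))
  · intro hc
    have h1 : f ⟨c, hc⟩ = ⟨b, mem_nbhd_self L b⟩ := Subtype.ext (hfp _)
    simp only [Equiv.trans_apply, h1]
    exact hgp _

lemma rare_iff_pIso (B : ℕ → Type*) [∀ n, L.Structure (B n)] (lam n : ℕ) (a : B n) :
    Rare L B lam n a ↔ ∃ m : ℕ, ∀ n' : ℕ, ({b : B n' | PIso L lam b a}).ncard ≤ m :=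
  Iff.rfl

lemma rare_congr {B : ℕ → Type*} [∀ n, L.Structure (B n)] [∀ n, Fintype (B n)]
    {lam n n₂ : ℕ} {a : B n} {a' : B n₂} (h : PIso L lam a a') (h' : Rare L B lam n₂ a') :
    Rare L B lam n a := by
  rw [rare_iff_pIso] at h' ⊢
  obtain ⟨m, hm⟩ := h'
  refine ⟨m, fun n' => le_trans (Set.ncard_le_ncard ?_ (Set.toFinite _)) (hm n')⟩
  intro b hb
  exact (hb : PIso L lam b a).trans L h

end PIso


section Codes

variable (L : FirstOrder.Language) [Finite L.Symbols]

/-- A code for a pointed structure on at most `K+1` elements. -/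
def Code (K : ℕ) : Type _ :=
  (k : Fin (K+1)) × Fin (k : ℕ) × (∀ s : Σ l, L.Relations l, (Fin s.1 → Fin (k : ℕ)) → Bool)

instance relFinite : Finite (Σ l, L.Relations l) :=
  Finite.of_injective (Sum.inr : _ → L.Symbols) Sum.inr_injective

instance codeFinite (K : ℕ) : Finite (Code L K) := by
  unfold Code
  infer_instance

variable {M : Type*} [L.Structure M]

/-- `a` satisfies the code `c`: its `lam`-ball can be enumerated as prescribed by `c`. -/
def Holds (K lam : ℕ) (c : Code L K) (a : M) : Prop :=
  ∃ ys : Fin (c.1 : ℕ) → M, Function.Injective ys ∧ ys c.2.1 = a ∧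
    (∀ i, DistLE L M (ys i) a lam) ∧
    (∀ z : M, DistLE L M z a lam → ∃ i, z = ys i) ∧
    ∀ (s : Σ l, L.Relations l) (t : Fin s.1 → Fin (c.1 : ℕ)),
      (Structure.RelMap s.2 (fun j => ys (t j)) ↔ c.2.2 s t = true)

noncomputable local instance instFintypeAux (k : ℕ) :
    Fintype ((s : Σ l, L.Relations l) × (Fin s.1 → Fin k)) :=
  Fintype.ofFinite _

/-- The formula expressing `Holds K lam c`. -/
noncomputable def codeForm (K lam : ℕ) (c : Code L K) : L.Formula (Fin 1) :=
  (BoundedFormula.iInf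
      (fun p : Fin (c.1 : ℕ) × Fin (c.1 : ℕ) =>
        if p.1 = p.2 then ⊤ else ∼(Term.bdEqual (.var (Sum.inr p.1)) (.var (Sum.inr p.2)))) ⊓
    Term.bdEqual (.var (Sum.inr c.2.1)) (.var (Sum.inl 0)) ⊓
    BoundedFormula.iInf
      (fun i : Fin (c.1 : ℕ) =>
        BoundedFormula.relabel (![Sum.inr i, Sum.inl 0] : Fin 2 → Fin 1 ⊕ Fin (c.1 : ℕ))
          (distForm L lam)) ⊓
    ((BoundedFormula.relabel
        (![Sum.inr (Fin.last (c.1 : ℕ)), Sum.inl 0] : Fin 2 → Fin 1 ⊕ Fin ((c.1 : ℕ)+1))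
        (distForm L lam)).imp
      (BoundedFormula.iSup
        (fun i : Fin (c.1 : ℕ) =>
          Term.bdEqual (.var (Sum.inr (Fin.castSucc i))) (.var (Sum.inr (Fin.last (c.1 : ℕ))))))).all ⊓
    BoundedFormula.iInf
      (fun st : (s : Σ l, L.Relations l) × (Fin s.1 → Fin (c.1 : ℕ)) =>
        if c.2.2 st.1 st.2 then st.1.2.boundedFormula (fun j => .var (Sum.inr (st.2 j)))
        else ∼(st.1.2.boundedFormula (fun j => .var (Sum.inr (st.2 j)))))).exs

lemma realize_codeForm (K lam : ℕ) (c : Code L K) (a : M) :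
    (codeForm L K lam c).Realize (fun _ => a) ↔ Holds L K lam c a := by
  classical
  show BoundedFormula.Realize _ _ default ↔ _
  rw [codeForm, realize_exs']
  refine exists_congr fun ys => ?_
  rw [BoundedFormula.realize_inf, BoundedFormula.realize_inf, BoundedFormula.realize_inf,
    BoundedFormula.realize_inf]
  have hys : ∀ (m : ℕ) (zs : Fin m → M) (g : Fin 2 → Fin 1 ⊕ Fin m),
      (BoundedFormula.relabel g (distForm L lam)).Realize (fun _ : Fin 1 => a) zs ↔
        DistLE L M (Sum.elim (fun _ : Fin 1 => a) zs (g 0))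
          (Sum.elim (fun _ : Fin 1 => a) zs (g 1)) lam := by
    intro m zs g
    rw [BoundedFormula.realize_relabel, realize_bf_zero, realize_distForm]
    have h1 : (Sum.elim (fun _ : Fin 1 => a) (zs ∘ Fin.castAdd 0)) =
        Sum.elim (fun _ : Fin 1 => a) zs := by
      refine congrArg _ (funext fun i => congrArg zs (Fin.ext rfl))
    rw [h1]
    exact Iff.rfl
  have hA : (BoundedFormula.iInf
      (fun p : Fin (c.1 : ℕ) × Fin (c.1 : ℕ) =>
        if p.1 = p.2 then ⊤ else ∼(Term.bdEqual (.var (Sum.inr p.1)) (.var (Sum.inr p.2)))) :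
        L.BoundedFormula (Fin 1) (c.1 : ℕ)).Realize
        (fun _ : Fin 1 => a) ys ↔ Function.Injective ys := by
    rw [BoundedFormula.realize_iInf]
    constructor
    · intro h i j hij
      by_contra hne
      have h2 := h (i, j)
      rw [if_neg hne, BoundedFormula.realize_not, BoundedFormula.realize_bdEqual] at h2
      exact h2 hij
    · intro hinj p
      split_ifs with hp
      · exact BoundedFormula.realize_top.2 trivial
      · rw [BoundedFormula.realize_not, BoundedFormula.realize_bdEqual]
        exact fun e => hp (hinj e)
  have hB : (Term.bdEqual (Term.var (Sum.inr c.2.1) : L.Term (Fin 1 ⊕ Fin (c.1 : ℕ)))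
      (Term.var (Sum.inl 0))).Realize
      (fun _ : Fin 1 => a) ys ↔ ys c.2.1 = a := by
    rw [BoundedFormula.realize_bdEqual]
    exact Iff.rfl
  have hC : (BoundedFormula.iInf
      (fun i : Fin (c.1 : ℕ) =>
        BoundedFormula.relabel (![Sum.inr i, Sum.inl 0] : Fin 2 → Fin 1 ⊕ Fin (c.1 : ℕ))
          (distForm L lam))).Realize (fun _ : Fin 1 => a) ys ↔
        ∀ i, DistLE L M (ys i) a lam := by
    rw [BoundedFormula.realize_iInf]
    constructor
    · intro h i
      have := h i
      rw [hys] at this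
      simpa using this
    · intro h i
      rw [hys]
      simpa using h i
  have hD : (((BoundedFormula.relabel
        (![Sum.inr (Fin.last (c.1 : ℕ)), Sum.inl 0] : Fin 2 → Fin 1 ⊕ Fin ((c.1 : ℕ)+1))
        (distForm L lam)).imp
      (BoundedFormula.iSup
        (fun i : Fin (c.1 : ℕ) =>
          Term.bdEqual (.var (Sum.inr (Fin.castSucc i))) (.var (Sum.inr (Fin.last (c.1 : ℕ))))))).all).Realize
        (fun _ : Fin 1 => a) ys ↔
        ∀ z : M, DistLE L M z a lam → ∃ i, z = ys i := by
    rw [BoundedFormula.realize_all]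
    refine forall_congr' fun z => ?_
    rw [BoundedFormula.realize_imp, hys, BoundedFormula.realize_iSup]
    constructor
    · intro h hd
      have h2 : DistLE L M
          (Sum.elim (fun _ : Fin 1 => a) (Fin.snoc ys z)
            ((![Sum.inr (Fin.last (c.1 : ℕ)), Sum.inl 0] : Fin 2 → Fin 1 ⊕ Fin ((c.1 : ℕ)+1)) 0))
          (Sum.elim (fun _ : Fin 1 => a) (Fin.snoc ys z)
            ((![Sum.inr (Fin.last (c.1 : ℕ)), Sum.inl 0] : Fin 2 → Fin 1 ⊕ Fin ((c.1 : ℕ)+1)) 1))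
          lam := by
        simpa [Fin.snoc_last] using hd
      obtain ⟨i, hi⟩ := h h2
      rw [BoundedFormula.realize_bdEqual] at hi
      refine ⟨i, ?_⟩
      simpa [Fin.snoc_castSucc, Fin.snoc_last] using hi.symm
    · intro h hd
      simp only [Matrix.cons_val_zero, Matrix.cons_val_one, Matrix.head_cons, Sum.elim_inl,
        Sum.elim_inr, Fin.snoc_last] at hd
      obtain ⟨i, hi⟩ := h hd
      refine ⟨i, ?_⟩
      rw [BoundedFormula.realize_bdEqual]
      simp only [Term.realize_var, Sum.elim_inr, Fin.snoc_castSucc, Fin.snoc_last]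
      exact hi.symm
  have hE : (BoundedFormula.iInf
      (fun st : (s : Σ l, L.Relations l) × (Fin s.1 → Fin (c.1 : ℕ)) =>
        if c.2.2 st.1 st.2 then st.1.2.boundedFormula (fun j => .var (Sum.inr (st.2 j)))
        else ∼(st.1.2.boundedFormula (fun j => .var (Sum.inr (st.2 j)))))).Realize (fun _ : Fin 1 => a) ys ↔
      ∀ (s : Σ l, L.Relations l) (t : Fin s.1 → Fin (c.1 : ℕ)),
        (Structure.RelMap s.2 (fun j => ys (t j)) ↔ c.2.2 s t = true) := by
    rw [BoundedFormula.realize_iInf]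
    constructor
    · intro h s t
      have h2 := h ⟨s, t⟩
      split_ifs at h2 with hst
      · rw [BoundedFormula.realize_rel] at h2
        simp only [Term.realize_var, Sum.elim_inr, Function.comp_apply] at h2
        exact iff_of_true h2 hst
      · rw [BoundedFormula.realize_not, BoundedFormula.realize_rel] at h2
        simp only [Term.realize_var, Sum.elim_inr, Function.comp_apply] at h2
        exact iff_of_false h2 hst
    · intro h st
      split_ifs with hst
      · rw [BoundedFormula.realize_rel]
        simp only [Term.realize_var, Sum.elim_inr, Function.comp_apply]
        exact (h st.1 st.2).2 hst
      · rw [BoundedFormula.realize_not, BoundedFormula.realize_rel]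
        simp only [Term.realize_var, Sum.elim_inr, Function.comp_apply]
        exact fun hr => hst ((h st.1 st.2).1 hr)
  rw [hA, hB, hC, hD, hE]
  tauto

end Codes



section CodeLemmas

variable (L : FirstOrder.Language) [Finite L.Symbols]

lemma exists_code {M : Type*} [L.Structure M] [Fintype M] {Δ : ℕ}
    (hdeg : ∀ v : M, ((gaifman L M).neighborSet v).encard ≤ (Δ : ℕ∞)) (lam : ℕ) (a : M) :
    ∃ c : Code L ((Δ+1)^lam), Holds L ((Δ+1)^lam) lam c a := by
  classical
  set S := {c : M | DistLE L M c a lam} with hS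
  have hfin : S.Finite := Set.toFinite _
  have hk : S.ncard ≤ (Δ+1)^lam := ball_ncard_le L hdeg a lam
  haveI : Fintype S := hfin.fintype
  have hcard : Fintype.card S = S.ncard := by
    rw [Set.ncard_eq_toFinset_card' S, Set.toFinset_card]
  have ha : a ∈ S := distLE_refl L a lam
  let e : ↥S ≃ Fin S.ncard := Fintype.equivFinOfCardEq hcard
  refine ⟨⟨⟨S.ncard, Nat.lt_succ_of_le hk⟩, e ⟨a, ha⟩,
      fun s t => decide (Structure.RelMap s.2 (fun j => ((e.symm (t j) : S) : M)))⟩,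
    fun i => ((e.symm i : S) : M), ?_, ?_, ?_, ?_, ?_⟩
  · intro i j h
    exact e.symm.injective (Subtype.coe_injective h)
  · show ((e.symm (e ⟨a, ha⟩) : S) : M) = a
    rw [Equiv.symm_apply_apply]
  · exact fun i => (e.symm i).2
  · intro z hd
    refine ⟨e ⟨z, hd⟩, ?_⟩
    show z = ((e.symm (e ⟨z, hd⟩) : S) : M)
    rw [Equiv.symm_apply_apply]
  · intro s t
    simp only [decide_eq_true_eq]

omit [Finite L.Symbols] in
lemma pIso_of_holds {M N : Type*} [L.Structure M] [L.Structure N] {K lam : ℕ} {c : Code L K}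
    {a : M} {b : N} (ha : Holds L K lam c a) (hb : Holds L K lam c b) : PIso L lam b a := by
  obtain ⟨ys, hysInj, hysPt, hysNear, hysCov, hysRel⟩ := ha
  obtain ⟨zs, hzsInj, hzsPt, hzsNear, hzsCov, hzsRel⟩ := hb
  have hmem₁ : ∀ i, ys i ∈ nbhd L M lam {a} := fun i => ⟨a, rfl, hysNear i⟩
  have hmem₂ : ∀ i, zs i ∈ nbhd L N lam {b} := fun i => ⟨b, rfl, hzsNear i⟩
  have hbij₁ : Function.Bijective (fun i => (⟨ys i, hmem₁ i⟩ : ↥(nbhd L M lam {a}))) := by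
    constructor
    · intro i j h
      exact hysInj (congrArg Subtype.val h)
    · rintro ⟨u, x, hx, hd⟩
      rw [Set.mem_singleton_iff] at hx
      obtain ⟨i, hi⟩ := hysCov u (hx ▸ hd)
      exact ⟨i, Subtype.ext hi.symm⟩
  have hbij₂ : Function.Bijective (fun i => (⟨zs i, hmem₂ i⟩ : ↥(nbhd L N lam {b}))) := by
    constructor
    · intro i j h
      exact hzsInj (congrArg Subtype.val h)
    · rintro ⟨u, x, hx, hd⟩
      rw [Set.mem_singleton_iff] at hx
      obtain ⟨i, hi⟩ := hzsCov u (hx ▸ hd)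
      exact ⟨i, Subtype.ext hi.symm⟩
  let e₁ := Equiv.ofBijective _ hbij₁
  let e₂ := Equiv.ofBijective _ hbij₂
  refine ⟨e₂.symm.trans e₁, ?_, ?_⟩
  · intro l R x
    have hx : ∀ j, (x j : N) = zs (e₂.symm (x j)) := by
      intro j
      have h2 : e₂ (e₂.symm (x j)) = x j := Equiv.apply_symm_apply _ _
      exact (congrArg Subtype.val h2).symm
    have h1 : Structure.RelMap R (fun j => (x j : N)) ↔
        c.2.2 ⟨l, R⟩ (fun j => e₂.symm (x j)) := by
      have h3 : (fun j => (x j : N)) = fun j => zs (e₂.symm (x j)) := funext hx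
      rw [h3]
      exact hzsRel ⟨l, R⟩ _
    have h2 : Structure.RelMap R (fun j => ((e₂.symm.trans e₁) (x j) : M)) ↔
        c.2.2 ⟨l, R⟩ (fun j => e₂.symm (x j)) :=
      hysRel ⟨l, R⟩ _
    exact h1.trans h2.symm
  · intro hb'
    have h1 : e₂.symm ⟨b, hb'⟩ = c.2.1 := by
      apply e₂.injective
      rw [Equiv.apply_symm_apply]
      exact (Subtype.ext hzsPt).symm
    show (e₁ (e₂.symm ⟨b, hb'⟩) : M) = a
    rw [h1]
    exact hysPt

end CodeLemmas


/-- the first-order part of Lemma 4.12(i) of the paper.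
Fix `Δ, λ ∈ ℕ`, a finite relational language `L`, and a sequence of finite
`L`-structures `B n`, each of degree at most `Δ`.  Then there is a first-order formula
`φ(x)` such that for every `n` and every `a ∈ B n`: `B n ⊨ φ(a)` iff `a` is `λ`-rare. -/
theorem stmt12 (L : FirstOrder.Language) [L.IsRelational] [Finite L.Symbols]
    (Δ lam : ℕ) (B : ℕ → Type*) [∀ n, L.Structure (B n)] [∀ n, Fintype (B n)]
    (hdeg : ∀ (n : ℕ) (v : B n), ((gaifman L (B n)).neighborSet v).encard ≤ (Δ : ℕ∞)) :
    ∃ φ : L.Formula (Fin 1), ∀ (n : ℕ) (a : B n),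
      φ.Realize (fun _ => a) ↔ Rare L B lam n a := by
  classical
  haveI : Fintype (Code L ((Δ+1)^lam)) := Fintype.ofFinite _
  refine ⟨BoundedFormula.iSup
    (fun c : Code L ((Δ+1)^lam) => if ∃ (n : ℕ) (a : B n), Holds L ((Δ+1)^lam) lam c a ∧ Rare L B lam n a
              then codeForm L ((Δ+1)^lam) lam c else ⊥), ?_⟩
  intro n a
  show BoundedFormula.Realize _ _ default ↔ _
  rw [BoundedFormula.realize_iSup]
  constructor
  · rintro ⟨c, hc⟩
    split_ifs at hc with hsat
    · rw [realize_bf_zero, realize_codeForm] at hc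
      obtain ⟨n₀, a₀, h₀, hr₀⟩ := hsat
      exact rare_congr L (pIso_of_holds L h₀ hc) hr₀
    · exact absurd hc (by simp)
  · intro hr
    obtain ⟨c, hc⟩ := exists_code L (hdeg n) lam a
    refine ⟨c, ?_⟩
    rw [if_pos ⟨n, a, hc, hr⟩, realize_bf_zero, realize_codeForm]
    exact hc

end PaperDefs
end
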